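/- Assume: Assumption 3 holds; N(x) is defined for every x ∈ 𝕏 and there is M ∈ ℕ with N(x) ≤ M for all x ∈ 𝕏; for every x ∈ 𝕏 an optimal control sequence for the horizon-N(x) problem from x exists, with κ(x) taken to be the control u provided by Assumption 3 when x ∈ 𝕏_f; and there exist class-K∞ functions α₁ and α₂ such that l(x,u) ≥ α₁(|x|) for all x ∈ 𝕏 and u ∈ 𝕌, and α₁(|x|) ≤ V_f(x) ≤ α₂(|x|) for all x ∈ 𝕏_f. Then: V(x) ≥ α₁(|x|) for all x ∈ 𝕏; V(x) ≤ α₂(|x|) for all x ∈ 𝕏_f; and V(f(x,κ(x))) ≤ V(x) − α₁(|x|) for all x ∈ 𝕏. -/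

import Mathlib

open Set Filter Topology

/-- The state/control spaces are Euclidean spaces. -/
abbrev Vec (n : ℕ) := EuclideanSpace ℝ (Fin n)

/-- A control `u` is feasible at a state `x` if `u ∈ U`, `f x u ∈ X` and `h x u ∈ Y`. -/
def Feas {n m p : ℕ} (f : Vec n → Vec m → Vec n) (h : Vec n → Vec m → Vec p)
    (X : Set (Vec n)) (U : Set (Vec m)) (Y : Set (Vec p))
    (x : Vec n) (u : Vec m) : Prop :=
  u ∈ U ∧ f x u ∈ X ∧ h x u ∈ Y

/-- The trajectory from `x` under the control sequence `u`: `x(0) = x`, `x(k+1) = f (x k) (u k)`. -/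
def traj {n m : ℕ} (f : Vec n → Vec m → Vec n) (x : Vec n) (u : ℕ → Vec m) : ℕ → Vec n
  | 0 => x
  | k + 1 => f (traj f x u k) (u k)

/-- A control sequence `u(0), …, u(N-1)` is feasible from `x` if each `u k` is feasible at `x(k)`. -/
def FeasSeq {n m p : ℕ} (f : Vec n → Vec m → Vec n) (h : Vec n → Vec m → Vec p)
    (X : Set (Vec n)) (U : Set (Vec m)) (Y : Set (Vec p))
    (x : Vec n) (N : ℕ) (u : ℕ → Vec m) : Prop :=
  ∀ k < N, Feas f h X U Y (traj f x u k) (u k)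

/-- The sets `X_N`: `X_0 = Xf`, and `X_{N+1} = {x ∈ X : ∃ u feasible at x, f x u ∈ X_N}`. -/
def XN {n m p : ℕ} (f : Vec n → Vec m → Vec n) (h : Vec n → Vec m → Vec p)
    (X : Set (Vec n)) (U : Set (Vec m)) (Y : Set (Vec p)) (Xf : Set (Vec n)) :
    ℕ → Set (Vec n)
  | 0 => Xf
  | N + 1 => {x | x ∈ X ∧ ∃ u, Feas f h X U Y x u ∧ f x u ∈ XN f h X U Y Xf N}

/-- `Xf` is controlled invariant. -/
def CtrlInv {n m p : ℕ} (f : Vec n → Vec m → Vec n) (h : Vec n → Vec m → Vec p)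
    (X : Set (Vec n)) (U : Set (Vec m)) (Y : Set (Vec p)) (Xf : Set (Vec n)) : Prop :=
  ∀ x ∈ Xf, ∃ u, Feas f h X U Y x u ∧ f x u ∈ Xf

/-- The set of horizons `N` for which some feasible control sequence of length `N`
from `x` has trajectory ending in `Xf`. -/
def HorizonSet {n m p : ℕ} (f : Vec n → Vec m → Vec n) (h : Vec n → Vec m → Vec p)
    (X : Set (Vec n)) (U : Set (Vec m)) (Y : Set (Vec p)) (Xf : Set (Vec n))
    (x : Vec n) : Set ℕ :=
  {N | ∃ u : ℕ → Vec m, FeasSeq f h X U Y x N u ∧ traj f x u N ∈ Xf}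

/-- `N(x)`: the least horizon for which a feasible control sequence from `x` ends in `Xf`. -/
noncomputable def Nmin {n m p : ℕ} (f : Vec n → Vec m → Vec n) (h : Vec n → Vec m → Vec p)
    (X : Set (Vec n)) (U : Set (Vec m)) (Y : Set (Vec p)) (Xf : Set (Vec n))
    (x : Vec n) : ℕ :=
  sInf (HorizonSet f h X U Y Xf x)

/-- The horizon-`N` cost of the control sequence `u` from `x`. -/
noncomputable def cost {n m : ℕ} (f : Vec n → Vec m → Vec n)
    (l : Vec n → Vec m → ℝ) (Vf : Vec n → ℝ) (x : Vec n) (N : ℕ) (u : ℕ → Vec m) : ℝ :=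
  (∑ k ∈ Finset.range N, l (traj f x u k) (u k)) + Vf (traj f x u N)

/-- The horizon-`N` optimal cost `V⁰_N(x)`: the infimum of the cost over all feasible
control sequences of length `N` from `x` whose trajectory ends in `Xf`. -/
noncomputable def Vopt {n m p : ℕ} (f : Vec n → Vec m → Vec n) (h : Vec n → Vec m → Vec p)
    (X : Set (Vec n)) (U : Set (Vec m)) (Y : Set (Vec p)) (Xf : Set (Vec n))
    (l : Vec n → Vec m → ℝ) (Vf : Vec n → ℝ) (N : ℕ) (x : Vec n) : ℝ :=
  sInf {c : ℝ | ∃ u : ℕ → Vec m,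
    FeasSeq f h X U Y x N u ∧ traj f x u N ∈ Xf ∧ c = cost f l Vf x N u}

/-- Assumption 3: for every `x ∈ Xf` there is a feasible `u` with `f x u ∈ Xf` and
`l x u + Vf (f x u) ≤ Vf x`. -/
def Assumption3 {n m p : ℕ} (f : Vec n → Vec m → Vec n) (h : Vec n → Vec m → Vec p)
    (X : Set (Vec n)) (U : Set (Vec m)) (Y : Set (Vec p)) (Xf : Set (Vec n))
    (l : Vec n → Vec m → ℝ) (Vf : Vec n → ℝ) : Prop :=
  ∀ x ∈ Xf, ∃ u, Feas f h X U Y x u ∧ f x u ∈ Xf ∧ l x u + Vf (f x u) ≤ Vf x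

/-- A function `α : [0,∞) → [0,∞)` is of class `K∞` if it is continuous, strictly
increasing, `α 0 = 0` and `α s → ∞` as `s → ∞`. -/
def IsKInf (α : ℝ → ℝ) : Prop :=
  ContinuousOn α (Ici 0) ∧ StrictMonoOn α (Ici 0) ∧ α 0 = 0 ∧
    Tendsto α atTop atTop ∧ ∀ s ∈ Ici (0 : ℝ), 0 ≤ α s

/-- Shifted trajectory: the tail of a trajectory is the trajectory of the tail. -/
lemma traj_shift {n m : ℕ} (f : Vec n → Vec m → Vec n) (x : Vec n) (u : ℕ → Vec m) :
    ∀ k, traj f (f x (u 0)) (fun j => u (j + 1)) k = traj f x u (k + 1)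
  | 0 => rfl
  | k + 1 => by
    show f (traj f (f x (u 0)) (fun j => u (j + 1)) k) (u (k + 1)) = _
    rw [traj_shift f x u k]; rfl

lemma feasSeq_tail {n m p : ℕ} {f : Vec n → Vec m → Vec n} {h : Vec n → Vec m → Vec p}
    {X : Set (Vec n)} {U : Set (Vec m)} {Y : Set (Vec p)} {x : Vec n} {N : ℕ}
    {u : ℕ → Vec m} (hu : FeasSeq f h X U Y x (N + 1) u) :
    FeasSeq f h X U Y (f x (u 0)) N (fun j => u (j + 1)) := by
  intro k hk
  have := hu (k + 1) (by omega)
  simpa [traj_shift] using this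

lemma cost_tail {n m : ℕ} (f : Vec n → Vec m → Vec n) (l : Vec n → Vec m → ℝ)
    (Vf : Vec n → ℝ) (x : Vec n) (N : ℕ) (u : ℕ → Vec m) :
    cost f l Vf x (N + 1) u
      = l x (u 0) + cost f l Vf (f x (u 0)) N (fun j => u (j + 1)) := by
  unfold cost
  rw [Finset.sum_range_succ']
  simp only [traj_shift]
  have h0 : traj f x u 0 = x := rfl
  rw [h0]; ring

/-- Prepend a control. -/
def consCtl {m : ℕ} (u0 : Vec m) (v : ℕ → Vec m) : ℕ → Vec m
  | 0 => u0
  | k + 1 => v k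

lemma traj_prepend {n m : ℕ} (f : Vec n → Vec m → Vec n) (x : Vec n) (u0 : Vec m)
    (v : ℕ → Vec m) : ∀ k, traj f x (consCtl u0 v) (k + 1) = traj f (f x u0) v k
  | 0 => rfl
  | k + 1 => by
    show f (traj f x (consCtl u0 v) (k + 1)) (consCtl u0 v (k + 1)) = _
    rw [traj_prepend f x u0 v k]; rfl

lemma horizon_prepend {n m p : ℕ} {f : Vec n → Vec m → Vec n} {h : Vec n → Vec m → Vec p}
    {X : Set (Vec n)} {U : Set (Vec m)} {Y : Set (Vec p)} {Xf : Set (Vec n)}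
    {x : Vec n} {u0 : Vec m} {N : ℕ} {v : ℕ → Vec m}
    (hu0 : Feas f h X U Y x u0) (hfs : FeasSeq f h X U Y (f x u0) N v)
    (hend : traj f (f x u0) v N ∈ Xf) :
    N + 1 ∈ HorizonSet f h X U Y Xf x := by
  refine ⟨consCtl u0 v, ?_, ?_⟩
  · intro k hk
    match k with
    | 0 => exact hu0
    | k + 1 =>
      rw [traj_prepend]
      exact hfs k (by omega)
  · rw [traj_prepend]; exact hend

lemma traj_mem_X {n m p : ℕ} {f : Vec n → Vec m → Vec n} {h : Vec n → Vec m → Vec p}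
    {X : Set (Vec n)} {U : Set (Vec m)} {Y : Set (Vec p)} {x : Vec n} {N : ℕ}
    {u : ℕ → Vec m} (hx : x ∈ X) (hu : FeasSeq f h X U Y x N u) :
    ∀ k ≤ N, traj f x u k ∈ X := by
  intro k hk
  match k with
  | 0 => exact hx
  | k + 1 => exact (hu k (by omega)).2.1

lemma cost_zero {n m : ℕ} (f : Vec n → Vec m → Vec n) (l : Vec n → Vec m → ℝ)
    (Vf : Vec n → ℝ) (x : Vec n) (u : ℕ → Vec m) : cost f l Vf x 0 u = Vf x := by
  simp [cost]; rfl

lemma cost_lb {n m p : ℕ} {f : Vec n → Vec m → Vec n} {h : Vec n → Vec m → Vec p}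
    {X : Set (Vec n)} {U : Set (Vec m)} {Y : Set (Vec p)} {Xf : Set (Vec n)}
    {l : Vec n → Vec m → ℝ} {Vf : Vec n → ℝ} {α₁ : ℝ → ℝ}
    (hα₁nn : ∀ s ∈ Ici (0 : ℝ), 0 ≤ α₁ s)
    (hl : ∀ x ∈ X, ∀ u ∈ U, α₁ ‖x‖ ≤ l x u)
    (hVf1 : ∀ x ∈ Xf, α₁ ‖x‖ ≤ Vf x)
    {x : Vec n} {N : ℕ} {u : ℕ → Vec m}
    (hx : x ∈ X) (hu : FeasSeq f h X U Y x N u) (hend : traj f x u N ∈ Xf) :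
    α₁ ‖x‖ ≤ cost f l Vf x N u := by
  have hnn : ∀ y : Vec n, (0 : ℝ) ≤ α₁ ‖y‖ := fun y => hα₁nn _ (norm_nonneg y)
  match N with
  | 0 =>
    rw [cost_zero]
    have : traj f x u 0 = x := rfl
    exact le_trans (hVf1 x (this ▸ hend)) le_rfl
  | N + 1 =>
    unfold cost
    have hterm : ∀ k ∈ Finset.range (N + 1), (0 : ℝ) ≤ l (traj f x u k) (u k) := by
      intro k hk
      have hk' : k < N + 1 := Finset.mem_range.mp hk
      have hxk : traj f x u k ∈ X := traj_mem_X hx hu k (by omega)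
      exact le_trans (hnn _) (hl _ hxk _ (hu k hk').1)
    have h0 : l x (u 0) ≤ ∑ k ∈ Finset.range (N + 1), l (traj f x u k) (u k) := by
      have := Finset.single_le_sum hterm (Finset.mem_range.mpr (Nat.succ_pos N))
      exact this
    have hVfend : (0 : ℝ) ≤ Vf (traj f x u (N + 1)) :=
      le_trans (hnn _) (hVf1 _ hend)
    have hlx : α₁ ‖x‖ ≤ l x (u 0) := hl x hx (u 0) (hu 0 (Nat.succ_pos N)).1
    linarith

lemma vopt_bddBelow {n m p : ℕ} {f : Vec n → Vec m → Vec n} {h : Vec n → Vec m → Vec p}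
    {X : Set (Vec n)} {U : Set (Vec m)} {Y : Set (Vec p)} {Xf : Set (Vec n)}
    {l : Vec n → Vec m → ℝ} {Vf : Vec n → ℝ} {α₁ : ℝ → ℝ}
    (hα₁nn : ∀ s ∈ Ici (0 : ℝ), 0 ≤ α₁ s)
    (hl : ∀ x ∈ X, ∀ u ∈ U, α₁ ‖x‖ ≤ l x u)
    (hVf1 : ∀ x ∈ Xf, α₁ ‖x‖ ≤ Vf x)
    {x : Vec n} (hx : x ∈ X) (N : ℕ) :
    BddBelow {c : ℝ | ∃ u : ℕ → Vec m,
      FeasSeq f h X U Y x N u ∧ traj f x u N ∈ Xf ∧ c = cost f l Vf x N u} := by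
  refine ⟨0, ?_⟩
  rintro c ⟨u, h1, h2, rfl⟩
  exact le_trans (hα₁nn _ (norm_nonneg x)) (cost_lb hα₁nn hl hVf1 hx h1 h2)

lemma nmin_zero_of_mem {n m p : ℕ} {f : Vec n → Vec m → Vec n} {h : Vec n → Vec m → Vec p}
    {X : Set (Vec n)} {U : Set (Vec m)} {Y : Set (Vec p)} {Xf : Set (Vec n)}
    {x : Vec n} (hx : x ∈ Xf) : Nmin f h X U Y Xf x = 0 := by
  have : (0 : ℕ) ∈ HorizonSet f h X U Y Xf x :=
    ⟨fun _ => 0, fun k hk => absurd hk (by omega), hx⟩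
  exact Nat.eq_zero_of_le_zero (Nat.sInf_le this)

lemma vopt_zero_of_mem {n m p : ℕ} {f : Vec n → Vec m → Vec n} {h : Vec n → Vec m → Vec p}
    {X : Set (Vec n)} {U : Set (Vec m)} {Y : Set (Vec p)} {Xf : Set (Vec n)}
    {l : Vec n → Vec m → ℝ} {Vf : Vec n → ℝ}
    {x : Vec n} (hx : x ∈ Xf) : Vopt f h X U Y Xf l Vf 0 x = Vf x := by
  unfold Vopt
  have hset : {c : ℝ | ∃ u : ℕ → Vec m,
      FeasSeq f h X U Y x 0 u ∧ traj f x u 0 ∈ Xf ∧ c = cost f l Vf x 0 u} = {Vf x} := by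
    ext c
    constructor
    · rintro ⟨u, _, _, rfl⟩
      simp [cost_zero]
    · rintro rfl
      exact ⟨fun _ => 0, fun k hk => absurd hk (by omega), hx, (cost_zero _ _ _ _ _).symm⟩
  rw [hset, csInf_singleton]

/-- Proposition 1: under Assumption 3, boundedness of the horizon function
`N(·)` on `X`, existence of optimal sequences (with `κ x` the first element of an optimal
sequence for `x ∉ Xf`, and `κ x` the control provided by Assumption 3 for `x ∈ Xf`), and
class-K∞ bounds `l(x,u) ≥ α₁(|x|)` on `X × U` and `α₁(|x|) ≤ Vf(x) ≤ α₂(|x|)` on `Xf`,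
the function `V(x) = V⁰_{N(x)}(x)` satisfies `V(x) ≥ α₁(|x|)` on `X`, `V(x) ≤ α₂(|x|)` on
`Xf`, and `V(f x (κ x)) ≤ V(x) - α₁(|x|)` on `X`. -/
theorem stmt_4 {n m p : ℕ} (f : Vec n → Vec m → Vec n) (h : Vec n → Vec m → Vec p)
    (X : Set (Vec n)) (U : Set (Vec m)) (Y : Set (Vec p)) (Xf : Set (Vec n))
    (l : Vec n → Vec m → ℝ) (Vf : Vec n → ℝ) (κ : Vec n → Vec m)
    (hXfX : Xf ⊆ X)
    (hA3 : Assumption3 f h X U Y Xf l Vf)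
    (hreach : ∀ x ∈ X, (HorizonSet f h X U Y Xf x).Nonempty)
    (M : ℕ) (hM : ∀ x ∈ X, Nmin f h X U Y Xf x ≤ M)
    (hopt : ∀ x ∈ X, ∃ u : ℕ → Vec m,
      FeasSeq f h X U Y x (Nmin f h X U Y Xf x) u ∧
      traj f x u (Nmin f h X U Y Xf x) ∈ Xf ∧
      cost f l Vf x (Nmin f h X U Y Xf x) u
        = Vopt f h X U Y Xf l Vf (Nmin f h X U Y Xf x) x ∧
      (x ∉ Xf → κ x = u 0))
    (hκf : ∀ x ∈ Xf, Feas f h X U Y x (κ x) ∧ f x (κ x) ∈ Xf ∧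
      l x (κ x) + Vf (f x (κ x)) ≤ Vf x)
    (α₁ α₂ : ℝ → ℝ) (hα₁ : IsKInf α₁) (hα₂ : IsKInf α₂)
    (hl : ∀ x ∈ X, ∀ u ∈ U, α₁ ‖x‖ ≤ l x u)
    (hVf : ∀ x ∈ Xf, α₁ ‖x‖ ≤ Vf x ∧ Vf x ≤ α₂ ‖x‖) :
    (∀ x ∈ X, α₁ ‖x‖ ≤ Vopt f h X U Y Xf l Vf (Nmin f h X U Y Xf x) x) ∧
    (∀ x ∈ Xf, Vopt f h X U Y Xf l Vf (Nmin f h X U Y Xf x) x ≤ α₂ ‖x‖) ∧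
    (∀ x ∈ X,
      Vopt f h X U Y Xf l Vf (Nmin f h X U Y Xf (f x (κ x))) (f x (κ x)) ≤
        Vopt f h X U Y Xf l Vf (Nmin f h X U Y Xf x) x - α₁ ‖x‖) := by
  have hα₁nn := hα₁.2.2.2.2
  have hVf1 : ∀ y ∈ Xf, α₁ ‖y‖ ≤ Vf y := fun y hy => (hVf y hy).1
  refine ⟨?_, ?_, ?_⟩
  · -- lower bound on X
    intro x hx
    obtain ⟨u, hfs, hend, hcost, _⟩ := hopt x hx
    refine le_csInf ⟨_, u, hfs, hend, rfl⟩ ?_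
    rintro c ⟨v, h1, h2, rfl⟩
    exact cost_lb hα₁nn hl hVf1 hx h1 h2
  · -- upper bound on Xf
    intro x hx
    rw [nmin_zero_of_mem hx, vopt_zero_of_mem hx]
    exact (hVf x hx).2
  · -- descent
    intro x hx
    by_cases hxf : x ∈ Xf
    · obtain ⟨hfeas, hfXf, hdesc⟩ := hκf x hxf
      rw [nmin_zero_of_mem hfXf, vopt_zero_of_mem hfXf,
        nmin_zero_of_mem hxf, vopt_zero_of_mem hxf]
      have hlb : α₁ ‖x‖ ≤ l x (κ x) := hl x hx _ hfeas.1
      linarith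
    · obtain ⟨u, hfs, hend, hcost, hκx⟩ := hopt x hx
      have hκu : κ x = u 0 := hκx hxf
      have hNpos : Nmin f h X U Y Xf x ≠ 0 := by
        intro h0
        rw [h0] at hend
        exact hxf hend
      obtain ⟨N₀, hN₀⟩ := Nat.exists_eq_succ_of_ne_zero hNpos
      rw [hN₀] at hfs hend hcost
      have hfeas0 : Feas f h X U Y x (u 0) := hfs 0 (by omega)
      have hx1 : f x (u 0) ∈ X := hfeas0.2.1
      have hfs' : FeasSeq f h X U Y (f x (u 0)) N₀ (fun j => u (j + 1)) :=
        feasSeq_tail hfs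
      have hend' : traj f (f x (u 0)) (fun j => u (j + 1)) N₀ ∈ Xf := by
        rw [traj_shift]; exact hend
      have hle : Nmin f h X U Y Xf (f x (u 0)) ≤ N₀ :=
        Nat.sInf_le ⟨_, hfs', hend'⟩
      obtain ⟨w, hw, hwend⟩ :
          Nmin f h X U Y Xf (f x (u 0)) ∈ HorizonSet f h X U Y Xf (f x (u 0)) :=
        Nat.sInf_mem (hreach _ hx1)
      have hge : Nmin f h X U Y Xf x ≤ Nmin f h X U Y Xf (f x (u 0)) + 1 :=
        Nat.sInf_le (horizon_prepend hfeas0 hw hwend)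
      have heq : Nmin f h X U Y Xf (f x (u 0)) = N₀ :=
        le_antisymm hle (by omega)
      rw [hκu, heq, hN₀]
      have hVle : Vopt f h X U Y Xf l Vf N₀ (f x (u 0))
          ≤ cost f l Vf (f x (u 0)) N₀ (fun j => u (j + 1)) :=
        csInf_le (vopt_bddBelow hα₁nn hl hVf1 hx1 N₀) ⟨_, hfs', hend', rfl⟩
      have hct := cost_tail f l Vf x N₀ u
      have hlb : α₁ ‖x‖ ≤ l x (u 0) := hl x hx _ hfeas0.1
      linarith
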